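/- In the braid group B_5, let γ = [1,2,1,3,3,2,2,3,4,3,2,1,3,2,1,3,2,4,2,4,1,4,2,1,3,2,3,4,3,4,3,2] (the braid word for o9_40487) and α' = [-3,1,2,3]. Then α'⁻¹·γ·α' = [(1,2,3,4)^5, 2,1,3,2,4,3,3,4,4,3,2,1]. -/
import Mathlib


/-- The Artin braid relations on `n` generators (so this presents the braid
group on `n + 1` strands); generator `i : Fin n` corresponds to `σ_{i+1}`. -/
def braidRels (n : ℕ) : Set (FreeGroup (Fin n)) :=
  { r | (∃ i j : Fin n, (i : ℕ) + 1 = j ∧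
          r = FreeGroup.of i * FreeGroup.of j * FreeGroup.of i *
              (FreeGroup.of j * FreeGroup.of i * FreeGroup.of j)⁻¹) ∨
        (∃ i j : Fin n, (i : ℕ) + 2 ≤ (j : ℕ) ∧
          r = FreeGroup.of i * FreeGroup.of j * (FreeGroup.of j * FreeGroup.of i)⁻¹) }

/-- The braid group on `n + 1` strands, with `n` Artin generators. -/
def BraidGroup (n : ℕ) : Type := PresentedGroup (braidRels n)

instance (n : ℕ) : Group (BraidGroup n) :=
  inferInstanceAs (Group (PresentedGroup (braidRels n)))

/-- The Artin generator `σ_{i+1}` of the braid group on `n + 1` strands. -/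
def braidGen {n : ℕ} (i : Fin n) : BraidGroup n := PresentedGroup.of i

/-- The letter of a braid word: a nonzero integer `a` denotes
`σ_{|a|}^{sign a}`. (Out-of-range letters give `1`.) -/
noncomputable def braidLetter (n : ℕ) (a : ℤ) : BraidGroup n :=
  if h : a.natAbs - 1 < n then
    (braidGen (⟨a.natAbs - 1, h⟩ : Fin n)) ^ (if 0 < a then (1 : ℤ) else -1)
  else 1

/-- The element of the braid group represented by a braid word. -/
noncomputable def braidWord (n : ℕ) (w : List ℤ) : BraidGroup n :=
  (w.map (braidLetter n)).prod

-- ### infrastructure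

lemma relMk {r : FreeGroup (Fin 4)} (hr : r ∈ braidRels 4) :
    PresentedGroup.mk (braidRels 4) r = 1 :=
  (QuotientGroup.eq_one_iff _).mpr (Subgroup.subset_normalClosure hr)

lemma braid_rel {i j : Fin 4} (h : (i : ℕ) + 1 = j) :
    braidGen i * braidGen j * braidGen i = braidGen j * braidGen i * braidGen j := by
  have h1 := relMk (Or.inl ⟨i, j, h, rfl⟩)
  rw [map_mul, map_mul, map_inv, map_mul, map_mul, mul_inv_eq_one] at h1
  exact h1

lemma braid_comm {i j : Fin 4} (h : (i : ℕ) + 2 ≤ (j : ℕ)) :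
    Commute (braidGen i) (braidGen j) := by
  have h1 := relMk (Or.inr ⟨i, j, h, rfl⟩)
  rw [map_mul, map_inv, map_mul, mul_inv_eq_one] at h1
  exact h1

section abst
variable {G : Type*} [Group G] {x y : G}

lemma bA2 (h : x*y*x = y*x*y) : x⁻¹*y⁻¹*x⁻¹ = y⁻¹*x⁻¹*y⁻¹ := by
  simpa [mul_inv_rev, mul_assoc] using congrArg Inv.inv h

lemma bA3 (h : x*y*x = y*x*y) : x*y*x⁻¹ = y⁻¹*x*y := by
  rw [mul_inv_eq_iff_eq_mul, mul_assoc y⁻¹ x y, mul_assoc y⁻¹ (x*y) x, h,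
    mul_assoc y x y, inv_mul_cancel_left]

lemma bA5 (h : x*y*x = y*x*y) : x*y⁻¹*x⁻¹ = y⁻¹*x⁻¹*y := by
  simpa [mul_inv_rev, mul_assoc] using congrArg Inv.inv (bA3 h)

lemma bA4 (h : x*y*x = y*x*y) : x⁻¹*y⁻¹*x = y*x⁻¹*y⁻¹ := by
  simpa [mul_inv_rev, mul_assoc] using (congrArg Inv.inv (bA3 h.symm)).symm

lemma bA6 (h : x*y*x = y*x*y) : x⁻¹*y*x = y*x*y⁻¹ := by
  simpa [mul_inv_rev, mul_assoc] using congrArg Inv.inv (bA4 h)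

end abst

lemma braidLetter_pos {a : ℤ} (h1 : 1 ≤ a.natAbs) (h4 : a.natAbs ≤ 4) (hp : 0 < a) :
    braidLetter 4 a = braidGen ⟨a.natAbs - 1, by omega⟩ := by
  unfold braidLetter
  rw [dif_pos (show a.natAbs - 1 < 4 by omega), if_pos hp, zpow_one]

lemma braidLetter_negg {a : ℤ} (h1 : 1 ≤ a.natAbs) (h4 : a.natAbs ≤ 4) (hp : a < 0) :
    braidLetter 4 a = (braidGen ⟨a.natAbs - 1, by omega⟩)⁻¹ := by
  unfold braidLetter
  have hna : ¬ (0:ℤ) < a := by omega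
  rw [dif_pos (show a.natAbs - 1 < 4 by omega)]
  simp only [hna, if_false, zpow_neg_one]

lemma braidLetter_mul_neg {a : ℤ} (ha : a ≠ 0) :
    braidLetter 4 a * braidLetter 4 (-a) = 1 := by
  have hab : (-a).natAbs = a.natAbs := Int.natAbs_neg a
  unfold braidLetter
  rw [hab]
  split_ifs <;> first | omega | simp

lemma braidLetter_neg {a : ℤ} (ha : a ≠ 0) :
    braidLetter 4 (-a) = (braidLetter 4 a)⁻¹ :=
  ((inv_eq_of_mul_eq_one_right (braidLetter_mul_neg ha)).symm)

lemma braidLetter_comm {a b : ℤ} (ha1 : 1 ≤ a.natAbs) (ha4 : a.natAbs ≤ 4)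
    (hb1 : 1 ≤ b.natAbs) (hb4 : b.natAbs ≤ 4)
    (hg : a.natAbs + 2 ≤ b.natAbs ∨ b.natAbs + 2 ≤ a.natAbs) :
    Commute (braidLetter 4 a) (braidLetter 4 b) := by
  unfold braidLetter
  rw [dif_pos (show a.natAbs - 1 < 4 by omega), dif_pos (show b.natAbs - 1 < 4 by omega)]
  have hc : Commute (braidGen (⟨a.natAbs - 1, by omega⟩ : Fin 4))
      (braidGen (⟨b.natAbs - 1, by omega⟩ : Fin 4)) := by
    rcases hg with h | h
    · exact braid_comm (by simpa using by omega)
    · exact (braid_comm (i := ⟨b.natAbs - 1, by omega⟩) (by simpa using by omega)).symm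
  exact hc.zpow_zpow _ _

lemma braid_rel_letters {a b : ℤ} (ha1 : 1 ≤ a.natAbs) (ha4 : a.natAbs ≤ 4)
    (hb1 : 1 ≤ b.natAbs) (hb4 : b.natAbs ≤ 4)
    (hadj : a.natAbs + 1 = b.natAbs ∨ b.natAbs + 1 = a.natAbs) :
    braidGen (⟨a.natAbs - 1, by omega⟩ : Fin 4) * braidGen (⟨b.natAbs - 1, by omega⟩ : Fin 4) *
      braidGen (⟨a.natAbs - 1, by omega⟩ : Fin 4) =
    braidGen (⟨b.natAbs - 1, by omega⟩ : Fin 4) * braidGen (⟨a.natAbs - 1, by omega⟩ : Fin 4) *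
      braidGen (⟨b.natAbs - 1, by omega⟩ : Fin 4) := by
  rcases hadj with h | h
  · exact braid_rel (by simpa using by omega)
  · exact (braid_rel (i := ⟨b.natAbs - 1, by omega⟩) (j := ⟨a.natAbs - 1, by omega⟩)
      (by simpa using by omega)).symm

lemma bLetter3 {a b : ℤ} (ha1 : 1 ≤ a.natAbs) (ha4 : a.natAbs ≤ 4)
    (hb1 : 1 ≤ b.natAbs) (hb4 : b.natAbs ≤ 4)
    (hadj : a.natAbs + 1 = b.natAbs ∨ b.natAbs + 1 = a.natAbs) (hs : 0 < a * b) :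
    braidLetter 4 a * braidLetter 4 b * braidLetter 4 a =
    braidLetter 4 b * braidLetter 4 a * braidLetter 4 b := by
  have rel := braid_rel_letters ha1 ha4 hb1 hb4 hadj
  rcases mul_pos_iff.mp hs with ⟨hpa, hpb⟩ | ⟨hpa, hpb⟩
  · rw [braidLetter_pos ha1 ha4 hpa, braidLetter_pos hb1 hb4 hpb]; exact rel
  · rw [braidLetter_negg ha1 ha4 hpa, braidLetter_negg hb1 hb4 hpb]; exact bA2 rel

lemma bLetter4 {a b : ℤ} (ha1 : 1 ≤ a.natAbs) (ha4 : a.natAbs ≤ 4)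
    (hb1 : 1 ≤ b.natAbs) (hb4 : b.natAbs ≤ 4)
    (hadj : a.natAbs + 1 = b.natAbs ∨ b.natAbs + 1 = a.natAbs) (hs : 0 < a * b) :
    braidLetter 4 a * braidLetter 4 b * braidLetter 4 (-a) =
    braidLetter 4 (-b) * braidLetter 4 a * braidLetter 4 b := by
  have rel := braid_rel_letters ha1 ha4 hb1 hb4 hadj
  rw [braidLetter_neg (by omega : a ≠ 0), braidLetter_neg (by omega : b ≠ 0)]
  rcases mul_pos_iff.mp hs with ⟨hpa, hpb⟩ | ⟨hpa, hpb⟩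
  · rw [braidLetter_pos ha1 ha4 hpa, braidLetter_pos hb1 hb4 hpb]; exact bA3 rel
  · rw [braidLetter_negg ha1 ha4 hpa, braidLetter_negg hb1 hb4 hpb]
    simp only [inv_inv]; exact bA4 rel

lemma bLetter5 {a b : ℤ} (ha1 : 1 ≤ a.natAbs) (ha4 : a.natAbs ≤ 4)
    (hb1 : 1 ≤ b.natAbs) (hb4 : b.natAbs ≤ 4)
    (hadj : a.natAbs + 1 = b.natAbs ∨ b.natAbs + 1 = a.natAbs) (hs : a * b < 0) :
    braidLetter 4 a * braidLetter 4 b * braidLetter 4 (-a) =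
    braidLetter 4 b * braidLetter 4 (-a) * braidLetter 4 (-b) := by
  have rel := braid_rel_letters ha1 ha4 hb1 hb4 hadj
  rw [braidLetter_neg (by omega : a ≠ 0), braidLetter_neg (by omega : b ≠ 0)]
  rcases mul_neg_iff.mp hs with ⟨hpa, hpb⟩ | ⟨hpa, hpb⟩
  · rw [braidLetter_pos ha1 ha4 hpa, braidLetter_negg hb1 hb4 hpb]
    simp only [inv_inv]; exact bA5 rel
  · rw [braidLetter_negg ha1 ha4 hpa, braidLetter_pos hb1 hb4 hpb]
    simp only [inv_inv]; exact bA6 rel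

lemma braidWord_nil : braidWord 4 [] = 1 := rfl

lemma braidWord_cons (a : ℤ) (l : List ℤ) :
    braidWord 4 (a :: l) = braidLetter 4 a * braidWord 4 l := by
  simp [braidWord]

lemma braidWord_append (u v : List ℤ) :
    braidWord 4 (u ++ v) = braidWord 4 u * braidWord 4 v := by
  simp [braidWord]

-- ### moves

abbrev Move := ℕ × ℕ × ℤ × ℤ

def ruleOf (k : ℕ) (a b : ℤ) : List ℤ × List ℤ :=
  if k = 0 then ([a, -a], [])
  else if k = 1 then ([], [a, -a])
  else if k = 2 then ([a, b], [b, a])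
  else if k = 3 then ([a, b, a], [b, a, b])
  else if k = 4 then ([a, b, -a], [-b, a, b])
  else ([a, b, -a], [b, -a, -b])

def condOf (k : ℕ) (a b : ℤ) : Prop :=
  if k = 0 ∨ k = 1 then 1 ≤ a.natAbs ∧ a.natAbs ≤ 4
  else if k = 2 then
    1 ≤ a.natAbs ∧ a.natAbs ≤ 4 ∧ 1 ≤ b.natAbs ∧ b.natAbs ≤ 4 ∧
      (a.natAbs + 2 ≤ b.natAbs ∨ b.natAbs + 2 ≤ a.natAbs)
  else if k = 3 ∨ k = 4 then
    1 ≤ a.natAbs ∧ a.natAbs ≤ 4 ∧ 1 ≤ b.natAbs ∧ b.natAbs ≤ 4 ∧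
      (a.natAbs + 1 = b.natAbs ∨ b.natAbs + 1 = a.natAbs) ∧ 0 < a * b
  else if k = 5 then
    1 ≤ a.natAbs ∧ a.natAbs ≤ 4 ∧ 1 ≤ b.natAbs ∧ b.natAbs ≤ 4 ∧
      (a.natAbs + 1 = b.natAbs ∨ b.natAbs + 1 = a.natAbs) ∧ a * b < 0
  else False

instance (k : ℕ) (a b : ℤ) : Decidable (condOf k a b) := by
  unfold condOf; infer_instance

lemma ruleOf_sound (k : ℕ) (a b : ℤ) (hc : condOf k a b) :
    braidWord 4 (ruleOf k a b).1 = braidWord 4 (ruleOf k a b).2 := by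
  rcases k with _ | _ | _ | _ | _ | _ | k
  · obtain ⟨h1, h4⟩ : 1 ≤ a.natAbs ∧ a.natAbs ≤ 4 := by simpa [condOf] using hc
    norm_num [ruleOf]
    simp only [braidWord_cons, braidWord_nil, mul_one]
    exact braidLetter_mul_neg (Int.natAbs_pos.mp h1)
  · obtain ⟨h1, h4⟩ : 1 ≤ a.natAbs ∧ a.natAbs ≤ 4 := by simpa [condOf] using hc
    norm_num [ruleOf]
    simp only [braidWord_cons, braidWord_nil, mul_one]
    exact (braidLetter_mul_neg (Int.natAbs_pos.mp h1)).symm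
  · obtain ⟨h1, h4, h5, h6, h7⟩ :
        1 ≤ a.natAbs ∧ a.natAbs ≤ 4 ∧ 1 ≤ b.natAbs ∧ b.natAbs ≤ 4 ∧
          (a.natAbs + 2 ≤ b.natAbs ∨ b.natAbs + 2 ≤ a.natAbs) := by simpa [condOf] using hc
    norm_num [ruleOf]
    simp only [braidWord_cons, braidWord_nil, mul_one]
    exact (braidLetter_comm h1 h4 h5 h6 h7).eq
  · obtain ⟨h1, h4, h5, h6, h7, h8⟩ :
        1 ≤ a.natAbs ∧ a.natAbs ≤ 4 ∧ 1 ≤ b.natAbs ∧ b.natAbs ≤ 4 ∧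
          (a.natAbs + 1 = b.natAbs ∨ b.natAbs + 1 = a.natAbs) ∧ 0 < a * b := by
      simpa [condOf] using hc
    norm_num [ruleOf]
    simp only [braidWord_cons, braidWord_nil, mul_one, mul_assoc]
    simpa [mul_assoc] using bLetter3 h1 h4 h5 h6 h7 h8
  · obtain ⟨h1, h4, h5, h6, h7, h8⟩ :
        1 ≤ a.natAbs ∧ a.natAbs ≤ 4 ∧ 1 ≤ b.natAbs ∧ b.natAbs ≤ 4 ∧
          (a.natAbs + 1 = b.natAbs ∨ b.natAbs + 1 = a.natAbs) ∧ 0 < a * b := by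
      simpa [condOf] using hc
    norm_num [ruleOf]
    simp only [braidWord_cons, braidWord_nil, mul_one, mul_assoc]
    simpa [mul_assoc] using bLetter4 h1 h4 h5 h6 h7 h8
  · obtain ⟨h1, h4, h5, h6, h7, h8⟩ :
        1 ≤ a.natAbs ∧ a.natAbs ≤ 4 ∧ 1 ≤ b.natAbs ∧ b.natAbs ≤ 4 ∧
          (a.natAbs + 1 = b.natAbs ∨ b.natAbs + 1 = a.natAbs) ∧ a * b < 0 := by
      simpa [condOf] using hc
    norm_num [ruleOf]
    simp only [braidWord_cons, braidWord_nil, mul_one, mul_assoc]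
    simpa [mul_assoc] using bLetter5 h1 h4 h5 h6 h7 h8
  · exact absurd hc (by simp [condOf])

def applyMove (m : Move) (w : List ℤ) : Option (List ℤ) :=
  let k := m.1; let p := m.2.1; let a := m.2.2.1; let b := m.2.2.2
  let l := (ruleOf k a b).1; let r := (ruleOf k a b).2
  if condOf k a b ∧ (w.drop p).take l.length = l then
    some (w.take p ++ r ++ w.drop (p + l.length))
  else none

lemma applyMove_sound {m : Move} {w w' : List ℤ} (h : applyMove m w = some w') :
    braidWord 4 w = braidWord 4 w' := by
  obtain ⟨k, p, a, b⟩ := m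
  unfold applyMove at h
  simp only at h
  split_ifs at h with hc
  obtain ⟨hcond, htake⟩ := hc
  have hw' : w' = w.take p ++ (ruleOf k a b).2 ++ w.drop (p + (ruleOf k a b).1.length) := by
    exact (Option.some_injective _ h).symm
  have hdropsplit : w.drop p = (ruleOf k a b).1 ++ w.drop (p + (ruleOf k a b).1.length) := by
    conv_lhs => rw [← List.take_append_drop (ruleOf k a b).1.length (w.drop p)]
    rw [htake, List.drop_drop, Nat.add_comm]
  have hw : w = w.take p ++ (ruleOf k a b).1 ++ w.drop (p + (ruleOf k a b).1.length) := by
    conv_lhs => rw [← List.take_append_drop p w, hdropsplit]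
    rw [List.append_assoc]
  rw [hw, hw', braidWord_append, braidWord_append, braidWord_append, braidWord_append,
    ruleOf_sound k a b hcond]

def runMoves (w : List ℤ) : List Move → Option (List ℤ)
  | [] => some w
  | m :: ms =>
    match applyMove m w with
    | some w' => runMoves w' ms
    | none => none

lemma runMoves_sound : ∀ (ms : List Move) (w w' : List ℤ),
    runMoves w ms = some w' → braidWord 4 w = braidWord 4 w'
  | [], w, w', h => by simpa [runMoves] using congrArg (fun o => o.map (braidWord 4)) h
  | m :: ms, w, w', h => by
    unfold runMoves at h
    cases ha : applyMove m w with
    | none => rw [ha] at h; exact absurd h (by simp)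
    | some w2 =>
      rw [ha] at h
      exact (applyMove_sound ha).trans (runMoves_sound ms w2 w' h)
def trace0 : List Move := [(0,3,3,0), (0,2,-1,0), (0,1,-2,0), (0,0,-3,0)]
def trace2 : List Move := [(0,31,1,0), (0,30,2,0), (0,29,3,0), (0,28,4,0), (0,27,4,0), (0,26,3,0), (0,25,3,0), (0,24,4,0), (0,23,2,0), (0,22,3,0), (0,21,1,0), (0,20,2,0), (0,19,4,0), (0,18,3,0), (0,17,2,0), (0,16,1,0), (0,15,4,0), (0,14,3,0), (0,13,2,0), (0,12,1,0), (0,11,4,0), (0,10,3,0), (0,9,2,0), (0,8,1,0), (0,7,4,0), (0,6,3,0), (0,5,2,0), (0,4,1,0), (0,3,4,0), (0,2,3,0), (0,1,2,0), (0,0,1,0)]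
def traceMain : List Move := [(2,2,-1,3), (0,3,-1,0), (1,1,3,0), (4,2,-3,-2), (0,4,-2,0), (0,0,-3,0), (2,1,-3,1), (0,2,-3,0), (1,31,-2,0), (3,32,2,1), (2,34,1,3), (0,35,1,0), (1,29,-3,0), (4,30,3,2), (0,32,2,0), (0,28,3,0), (1,23,-3,0), (3,24,3,2), (2,26,2,4), (1,27,-3,0), (3,28,3,2), (2,30,2,4), (0,31,2,0), (0,22,3,0), (1,23,-4,0), (3,24,4,3), (0,26,3,0), (2,19,4,2), (2,20,4,1), (2,21,4,2), (0,22,4,0), (1,29,-3,0), (3,30,3,2), (0,32,2,0), (0,31,3,0), (2,27,3,1), (0,28,3,0), (2,26,4,1), (2,27,4,2), (0,28,4,0), (2,27,2,-4), (1,28,-3,0), (4,29,3,2), (1,31,-3,0), (4,32,3,2), (2,34,2,-4), (0,35,2,0), (0,30,3,0), (2,25,3,1), (1,26,-4,0), (4,27,4,3), (0,29,3,0), (2,23,4,2), (2,24,4,1), (0,25,4,0), (1,29,-4,0), (4,30,4,3), (0,32,3,0), (2,26,4,-2), (2,27,4,-2), (0,28,4,0), (2,24,1,-3), (1,25,-2,0),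 (4,26,2,1), (1,28,-2,0), (4,29,2,1), (2,31,1,-3), (2,32,1,4), (0,33,1,0), (0,27,2,0), (1,23,-3,0), (4,24,3,2), (0,26,2,0), (0,22,3,0), (0,21,2,0), (2,20,1,3), (0,21,1,0), (1,18,-2,0), (3,19,2,1), (2,21,1,3), (0,22,1,0), (2,16,2,4), (0,17,2,0), (1,20,-3,0), (4,21,3,2), (2,23,2,4), (0,24,2,0), (0,19,3,0), (0,18,2,0), (0,19,4,0), (0,18,3,0), (1,17,-2,0), (4,18,2,1), (0,20,1,0), (2,14,2,4), (2,15,2,4), (0,16,2,0), (2,12,1,3), (2,13,1,4), (2,14,1,4), (0,15,1,0), (2,14,4,2), (0,15,4,0), (1,14,-3,0), (4,15,3,2), (0,17,2,0), (1,12,-4,0), (3,13,4,3), (0,15,3,0), (2,11,2,-4), (1,12,-3,0), (3,13,3,2), (2,15,2,4), (0,16,2,0), (1,10,-4,0), (4,11,4,3), (0,13,3,0), (2,9,1,-4), (2,10,1,-3), (2,11,1,4), (1,12,-2,0), (3,13,2,1), (2,15,1,3), (2,16,1,4), (2,17,1,3), (0,18,1,0), (2,8,2,-4), (1,9,-3,0),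 (4,10,3,2), (2,12,2,4), (0,13,2,0), (1,7,-4,0), (4,8,4,3), (0,10,3,0), (0,6,4,0), (0,5,3,0), (2,4,2,4), (0,5,2,0), (1,11,-4,0), (4,12,4,3), (0,14,3,0), (0,10,4,0), (0,9,3,0), (2,8,2,4), (0,9,2,0), (2,7,1,4), (0,8,1,0), (0,7,4,0), (1,5,-4,0), (3,6,4,3), (0,8,3,0), (0,4,4,0), (1,3,-3,0), (3,4,3,2), (2,6,2,4), (0,7,2,0), (0,2,3,0), (1,1,-2,0), (3,2,2,1), (2,4,1,3), (2,5,1,4), (0,6,1,0), (0,0,2,0), (0,3,4,0), (0,2,3,0), (0,1,2,0), (0,0,1,0)]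

def wordGamma : List ℤ :=
  [1, 2, 1, 3, 3, 2, 2, 3, 4, 3, 2, 1, 3, 2, 1, 3, 2, 4, 2, 4, 1, 4, 2, 1, 3, 2, 3, 4, 3,
   4, 3, 2]
def wordA : List ℤ := [-3, 1, 2, 3]
def wordAinv : List ℤ := [-3, -2, -1, 3]
def wordR : List ℤ :=
  [1, 2, 3, 4, 1, 2, 3, 4, 1, 2, 3, 4, 1, 2, 3, 4, 1, 2, 3, 4, 2, 1, 3, 2, 4, 3, 3, 4, 4,
   3, 2, 1]
def wordRinv : List ℤ := (wordR.map (fun a => -a)).reverse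

theorem stmt11
    (γ α : BraidGroup 4)
    (hγ : γ = braidWord 4
      [1, 2, 1, 3, 3, 2, 2, 3, 4, 3, 2, 1, 3, 2, 1, 3, 2, 4, 2, 4, 1, 4, 2, 1, 3, 2, 3, 4, 3,
      4, 3, 2])
    (hα : α = braidWord 4
      [-3, 1, 2, 3]) :
    α⁻¹ * γ * α = braidWord 4
      [1, 2, 3, 4, 1, 2, 3, 4, 1, 2, 3, 4, 1, 2, 3, 4, 1, 2, 3, 4, 2, 1, 3, 2, 4, 3, 3, 4, 4,
      3, 2, 1] := by
  subst hγ hα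
  have h0 : braidWord 4 wordAinv * braidWord 4 wordA = 1 := by
    rw [← braidWord_append]
    exact (runMoves_sound trace0 _ _ (by decide)).trans braidWord_nil
  have hAinv : braidWord 4 wordAinv = (braidWord 4 wordA)⁻¹ := eq_inv_of_mul_eq_one_left h0
  have h2 : braidWord 4 wordR * braidWord 4 wordRinv = 1 := by
    rw [← braidWord_append]
    exact (runMoves_sound trace2 _ _ (by decide)).trans braidWord_nil
  have hRinv : braidWord 4 wordRinv = (braidWord 4 wordR)⁻¹ :=
    (inv_eq_of_mul_eq_one_right h2).symm
  have hm : braidWord 4 wordAinv * braidWord 4 wordGamma * braidWord 4 wordA *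
      braidWord 4 wordRinv = 1 := by
    rw [← braidWord_append, ← braidWord_append, ← braidWord_append]
    exact (runMoves_sound traceMain _ _ (by decide)).trans braidWord_nil
  rw [hAinv, hRinv] at hm
  show (braidWord 4 wordA)⁻¹ * braidWord 4 wordGamma * braidWord 4 wordA = braidWord 4 wordR
  exact mul_inv_eq_one.mp hm
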